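/- Let m≥1, r≥0, β a weak composition with m parts, and α=(α_1,…,α_k) a strong composition whose last part is α_k=1. Let μ∈OP^all_{r;β,α} be an ordered multiset partition with all letters in {0,1,…,m}, and let c.μ be the ordered multiset partition obtained from μ by replacing every letter j in every block by j−1 modulo m+1 (so 0 becomes m and j≥1 becomes j−1). Then miniword(c.μ) equals the word obtained from miniword(μ) by applying the same letterwise replacement j ↦ j−1 mod (m+1). -/

import Mathlib

open scoped BigOperators

namespace omp

/-- The multiset `A(β) ∪ {0^r}`: the letter `i` (for `1 ≤ i ≤ m`) with multiplicity `β_i`,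
together with `r` copies of the letter `0`. -/
def content (r : ℕ) (β : List ℕ) : Multiset ℕ :=
  Multiset.replicate r 0 +
    ∑ i ∈ Finset.range β.length, Multiset.replicate (β.getD i 0) (i + 1)

/-- `π` is an ordered multiset partition of `A(β) ∪ {0^r}` into `k` (nonempty) blocks,
with `0` allowed anywhere: the set `OP^all_{r;β,k}`. -/
def IsOPall (r : ℕ) (β : List ℕ) (k : ℕ) (π : List (Finset ℕ)) : Prop :=
  π.length = k ∧ (∀ B ∈ π, B.Nonempty) ∧ (π.map Finset.val).sum = content r β

/-- Additionally, the last block does not contain `0`: the set `OP_{r;β,k}`. -/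
def IsOP (r : ℕ) (β : List ℕ) (k : ℕ) (π : List (Finset ℕ)) : Prop :=
  IsOPall r β k π ∧ 0 ∉ π.getLastD ∅

/-- Ordered multiset partitions of `A(β) ∪ {0^r}` with shape `α`: `OP^all_{r;β,α}`. -/
def IsOPallSh (r : ℕ) (β α : List ℕ) (π : List (Finset ℕ)) : Prop :=
  (∀ B ∈ π, B.Nonempty) ∧ (π.map Finset.val).sum = content r β ∧
    π.map Finset.card = α

/-- Shape `α` and last block avoiding `0`: `OP_{r;β,α}`. -/
def IsOPSh (r : ℕ) (β α : List ℕ) (π : List (Finset ℕ)) : Prop :=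
  IsOPallSh r β α π ∧ 0 ∉ π.getLastD ∅

/-- The `i`-th block (0-indexed). -/
def blk (π : List (Finset ℕ)) (i : ℕ) : Finset ℕ := π.getD i ∅

/-- `inv`: pairs of a letter `a` in block `B_i` and the minimum `b` of a later block `B_j`
with `a > b`. -/
def inv (π : List (Finset ℕ)) : ℕ :=
  ∑ i ∈ Finset.range π.length, ∑ j ∈ Finset.range π.length,
    if i < j then
      (@Finset.filter ℕ (fun (a : ℕ) => (blk π j).min < (a : WithBot ℕ))
        (fun _ => WithBot.decidableLT _ _) (blk π i)).card
    else 0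

/-- The word `σ(π)`: each block written in decreasing order, blocks concatenated. -/
def sigmaWord (π : List (Finset ℕ)) : List ℕ :=
  (π.map (fun B => (B.sort (· ≤ ·)).reverse)).flatten

/-- The word `ind(π) = 0^{|B_1|} 1^{|B_2|} ⋯ (k-1)^{|B_k|}`. -/
def indWord (π : List (Finset ℕ)) : List ℕ :=
  (π.zipIdx.map (fun p => List.replicate p.1.card p.2)).flatten

/-- The major index of a word (positions are 1-based). -/
def majW (w : List ℕ) : ℕ :=
  ∑ i ∈ Finset.range (w.length - 1),
    if w.getD (i + 1) 0 < w.getD i 0 then i + 1 else 0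

/-- `maj(π)`: the sum of `ind(π)_{i+1}` over descents `σ_i > σ_{i+1}` of `σ(π)`. -/
def maj (π : List (Finset ℕ)) : ℕ :=
  ∑ i ∈ Finset.range ((sigmaWord π).length - 1),
    if (sigmaWord π).getD (i + 1) 0 < (sigmaWord π).getD i 0 then
      (indWord π).getD (i + 1) 0
    else 0

/-- `dinv(π)`: primary and secondary diagonal inversions, where `B_i^h` is the `h`-th smallest
element of block `B_i` (here `h` is 0-indexed). -/
def dinv (π : List (Finset ℕ)) : ℕ :=
  ∑ i ∈ Finset.range π.length, ∑ j ∈ Finset.range π.length,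
    if i < j then
      ((Finset.range (blk π i).card).filter (fun h =>
          h < (blk π j).card ∧
            ((blk π j).sort (· ≤ ·)).getD h 0 < ((blk π i).sort (· ≤ ·)).getD h 0)).card +
      ((Finset.range (blk π i).card).filter (fun h =>
          h + 1 < (blk π j).card ∧
            ((blk π j).sort (· ≤ ·)).getD (h + 1) 0 < ((blk π i).sort (· ≤ ·)).getD h 0)).card
    else 0

/-- `miniword(π)`, built from right to left: the last block in increasing order; inductively,
if the word built so far begins with `s`, block `B_i` contributes its elements greater than `s`
in increasing order followed by its elements at most `s` in increasing order. -/
def miniword : List (Finset ℕ) → List ℕ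
  | [] => []
  | B :: rest =>
    match miniword rest with
    | [] => B.sort (· ≤ ·)
    | s :: w =>
        ((B.filter (fun x => s < x)).sort (· ≤ ·) ++
          (B.filter (fun x => x ≤ s)).sort (· ≤ ·)) ++ s :: w

/-- `minimaj(π) = maj(miniword(π))`. -/
def minimaj (π : List (Finset ℕ)) : ℕ := majW (miniword π)

/-- `D^{stat}_{r;β,k}(q) = Σ_{π ∈ OP_{r;β,k}} q^{stat(π)}` (the set is finite, so the
finite-support sum below is the intended polynomial). -/
noncomputable def D (r : ℕ) (β : List ℕ) (k : ℕ)
    (stat : List (Finset ℕ) → ℕ) : Polynomial ℕ :=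
  ∑ᶠ π ∈ {π | IsOP r β k π}, Polynomial.X ^ stat π

/-- `D^{stat+}_{r;β,k}(q) = Σ_{π ∈ OP^all_{r;β,k}} q^{stat(π)}`. -/
noncomputable def Dall (r : ℕ) (β : List ℕ) (k : ℕ)
    (stat : List (Finset ℕ) → ℕ) : Polynomial ℕ :=
  ∑ᶠ π ∈ {π | IsOPall r β k π}, Polynomial.X ^ stat π

/-- `D^{stat}_{r;β,α}(q)`, the shape-refined generating function. -/
noncomputable def DSh (r : ℕ) (β α : List ℕ)
    (stat : List (Finset ℕ) → ℕ) : Polynomial ℕ :=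
  ∑ᶠ π ∈ {π | IsOPSh r β α π}, Polynomial.X ^ stat π

/-- `D^{stat+}_{r;β,α}(q)`, the shape-refined generating function with `0` allowed
in the last block. -/
noncomputable def DallSh (r : ℕ) (β α : List ℕ)
    (stat : List (Finset ℕ) → ℕ) : Polynomial ℕ :=
  ∑ᶠ π ∈ {π | IsOPallSh r β α π}, Polynomial.X ^ stat π

end omp


namespace ompaux

def c (m j : ℕ) : ℕ := (j + m) % (m + 1)

def kk (m t y : ℕ) : ℕ := if t < y then y - (t + 1) else y + m - t

lemma c_le (m x : ℕ) : c m x ≤ m := Nat.lt_succ_iff.mp (Nat.mod_lt _ (Nat.succ_pos m))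

lemma c_eq (m : ℕ) {x : ℕ} (hx : x ≤ m) : c m x = if x = 0 then m else x - 1 := by
  unfold c
  split_ifs with h
  · subst h; simpa using Nat.mod_eq_of_lt (Nat.lt_succ_self m)
  · have e : x + m = (x - 1) + (m + 1) := by omega
    rw [e, Nat.add_mod_right, Nat.mod_eq_of_lt (by omega)]

lemma kk_c (m : ℕ) {s x : ℕ} (hs : s ≤ m) (hx : x ≤ m) :
    kk m (c m s) (c m x) = kk m s x := by
  rw [c_eq m hs, c_eq m hx]
  unfold kk
  split_ifs <;> omega

lemma c_injOn (m : ℕ) {a b : ℕ} (ha : a ≤ m) (hb : b ≤ m) (h : c m a = c m b) : a = b := by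
  rw [c_eq m ha, c_eq m hb] at h
  split_ifs at h <;> omega

lemma sorted_split (m t : ℕ) (C : Finset ℕ) (hC : ∀ x ∈ C, x ≤ m) (ht : t ≤ m) :
    ((C.filter (fun x => t < x)).sort (· ≤ ·) ++ (C.filter (fun x => x ≤ t)).sort (· ≤ ·)).Pairwise
      (fun a b => kk m t a < kk m t b) := by
  rw [List.pairwise_append]
  refine ⟨?_, ?_, ?_⟩
  · refine (Finset.sortedLT_sort _).pairwise.imp_of_mem ?_
    intro a b ha hb hab
    rw [Finset.mem_sort, Finset.mem_filter] at ha hb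
    have := hC a ha.1; have := hC b hb.1
    unfold kk; split_ifs <;> omega
  · refine (Finset.sortedLT_sort _).pairwise.imp_of_mem ?_
    intro a b ha hb hab
    rw [Finset.mem_sort, Finset.mem_filter] at ha hb
    have := hC a ha.1; have := hC b hb.1
    unfold kk; split_ifs <;> omega
  · intro a ha b hb
    rw [Finset.mem_sort, Finset.mem_filter] at ha hb
    have := hC a ha.1; have := hC b hb.1
    have h1 := ha.2; have h2 := hb.2
    unfold kk; split_ifs <;> omega

lemma sort_coe (C : Finset ℕ) : ((C.sort (· ≤ ·) : List ℕ) : Multiset ℕ) = C.val :=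
  (Multiset.coe_eq_coe.mpr (Finset.sort_perm_toList _ _)).trans (Finset.coe_toList _)

lemma split_perm (t : ℕ) (C : Finset ℕ) :
    (((C.filter (fun x => t < x)).sort (· ≤ ·) ++
        (C.filter (fun x => x ≤ t)).sort (· ≤ ·) : List ℕ) : Multiset ℕ) = C.val := by
  rw [← Multiset.coe_add, sort_coe, sort_coe, Finset.filter_val, Finset.filter_val]
  have h : (Multiset.filter (fun x => x ≤ t) C.val) =
      Multiset.filter (fun x => ¬ t < x) C.val := by
    simp [not_lt]
  rw [h, Multiset.filter_add_not]

lemma key (m s : ℕ) (hs : s ≤ m) (B : Finset ℕ) (hB : ∀ x ∈ B, x ≤ m) :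
    ((B.image (c m)).filter (fun x => c m s < x)).sort (· ≤ ·) ++
        ((B.image (c m)).filter (fun x => x ≤ c m s)).sort (· ≤ ·)
      = ((B.filter (fun x => s < x)).sort (· ≤ ·) ++
          (B.filter (fun x => x ≤ s)).sort (· ≤ ·)).map (c m) := by
  haveI : Std.Antisymm (fun a b => kk m (c m s) a < kk m (c m s) b) :=
    ⟨fun a b h1 h2 => absurd h2 (not_lt.2 h1.le)⟩
  have hBc : ∀ x ∈ B.image (c m), x ≤ m := by
    intro x hx
    exact Finset.mem_image.mp hx |>.elim (fun a ha => ha.2 ▸ c_le m a)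
  refine (fun hp h1 h2 => List.Perm.eq_of_pairwise' (r := fun a b => kk m (c m s) a < kk m (c m s) b) h1 h2 hp) ?_ ?_ ?_
  · rw [← Multiset.coe_eq_coe, split_perm, ← Multiset.map_coe, split_perm,
      Finset.image_val_of_injOn]
    intro a ha b hb h
    exact c_injOn m (hB a ha) (hB b hb) h
  · exact sorted_split m (c m s) (B.image (c m)) hBc (c_le m s)
  · have h0 : ((B.filter (fun x => s < x)).sort (· ≤ ·) ++
        (B.filter (fun x => x ≤ s)).sort (· ≤ ·)).Pairwise
        (fun a b => kk m (c m s) (c m a) < kk m (c m s) (c m b)) := by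
      refine (sorted_split m s B hB hs).imp_of_mem ?_
      intro a b ha hb hab
      have hamem : a ∈ B := by
        rcases List.mem_append.mp ha with h | h <;>
          exact (Finset.mem_filter.mp (Finset.mem_sort _ |>.mp h)).1
      have hbmem : b ∈ B := by
        rcases List.mem_append.mp hb with h | h <;>
          exact (Finset.mem_filter.mp (Finset.mem_sort _ |>.mp h)).1
      rw [kk_c m hs (hB a hamem), kk_c m hs (hB b hbmem)]
      exact hab
    exact h0.map (c m) (fun a b h => h)

lemma miniword_cons_of_eq (B : Finset ℕ) (rest : List (Finset ℕ)) {s : ℕ} {w : List ℕ}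
    (h : omp.miniword rest = s :: w) :
    omp.miniword (B :: rest) =
      ((B.filter (fun x => s < x)).sort (· ≤ ·) ++
        (B.filter (fun x => x ≤ s)).sort (· ≤ ·)) ++ s :: w := by
  rw [omp.miniword, h]

lemma miniword_singleton (B : Finset ℕ) : omp.miniword [B] = B.sort (· ≤ ·) := by
  rw [omp.miniword]
  rfl

lemma miniword_ne_nil : ∀ (μ : List (Finset ℕ)), (∀ B ∈ μ, B.Nonempty) → μ ≠ [] →
    omp.miniword μ ≠ [] := by
  intro μ
  induction μ with
  | nil => simp
  | cons B rest ih =>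
    intro hne _
    cases rest with
    | nil =>
      rw [miniword_singleton]
      intro h
      have hl := Finset.length_sort (α := ℕ) (· ≤ ·) (s := B)
      rw [h] at hl
      exact absurd (Finset.card_eq_zero.mp hl.symm) (hne B (by simp)).ne_empty
    | cons C rest' =>
      have h := ih (fun b hb => hne b (List.mem_cons_of_mem _ hb)) (by simp)
      obtain ⟨s, w, hw⟩ := List.exists_cons_of_ne_nil h
      rw [miniword_cons_of_eq _ _ hw]
      simp

lemma miniword_mem : ∀ (μ : List (Finset ℕ)) (x : ℕ), x ∈ omp.miniword μ →
    ∃ B ∈ μ, x ∈ B := by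
  intro μ
  induction μ with
  | nil => simp [omp.miniword]
  | cons B rest ih =>
    intro x hx
    rcases h : omp.miniword rest with _ | ⟨s, w⟩
    · rw [omp.miniword, h] at hx
      exact ⟨B, by simp, Finset.mem_sort _ |>.mp hx⟩
    · rw [miniword_cons_of_eq _ _ h] at hx
      rcases List.mem_append.mp hx with h1 | h1
      · rcases List.mem_append.mp h1 with h2 | h2 <;>
          exact ⟨B, by simp, (Finset.mem_filter.mp (Finset.mem_sort _ |>.mp h2)).1⟩
      · obtain ⟨C, hC, hxC⟩ := ih x (h ▸ h1)
        exact ⟨C, List.mem_cons_of_mem _ hC, hxC⟩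

lemma main_ind (m : ℕ) : ∀ (μ : List (Finset ℕ)), (∀ B ∈ μ, B.Nonempty) →
    (∀ B ∈ μ, ∀ x ∈ B, x ≤ m) → (∀ B', μ.getLast? = some B' → B'.card ≤ 1) →
    omp.miniword (μ.map (Finset.image (c m))) = (omp.miniword μ).map (c m) := by
  intro μ
  induction μ with
  | nil => intro _ _ _; rfl
  | cons B rest ih =>
    intro hne hle hlast
    cases rest with
    | nil =>
      have hcard : B.card ≤ 1 := hlast B rfl
      have hcard1 : B.card = 1 :=
        le_antisymm hcard (Finset.card_pos.mpr (hne B (by simp)))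
      obtain ⟨a, rfl⟩ := Finset.card_eq_one.mp hcard1
      simp only [List.map_cons, List.map_nil, Finset.image_singleton,
        miniword_singleton, Finset.sort_singleton, List.map_cons, List.map_nil]
    | cons C rest' =>
      have hnerest : ∀ b ∈ C :: rest', Finset.Nonempty b :=
        fun b hb => hne b (List.mem_cons_of_mem _ hb)
      have hlerest : ∀ b ∈ C :: rest', ∀ x ∈ b, x ≤ m :=
        fun b hb => hle b (List.mem_cons_of_mem _ hb)
      have hlastrest : ∀ B', (C :: rest').getLast? = some B' → B'.card ≤ 1 := by
        intro B' hB'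
        exact hlast B' (by rw [List.getLast?_cons_cons]; exact hB')
      have hmini := miniword_ne_nil (C :: rest') hnerest (by simp)
      obtain ⟨s, w, hw⟩ := List.exists_cons_of_ne_nil hmini
      have hs : s ≤ m := by
        obtain ⟨D, hD, hsD⟩ := miniword_mem (C :: rest') s (hw ▸ List.mem_cons_self)
        exact hlerest D hD s hsD
      have ihr := ih hnerest hlerest hlastrest
      rw [hw] at ihr
      rw [List.map_cons]
      rw [miniword_cons_of_eq _ _ (ihr.trans List.map_cons)]
      rw [miniword_cons_of_eq _ _ hw]
      rw [List.map_append, List.map_cons]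
      rw [key m s hs B (hle B (by simp))]

lemma content_le (r : ℕ) (β : List ℕ) (x : ℕ) (hx : x ∈ omp.content r β) :
    x ≤ β.length := by
  unfold omp.content at hx
  rcases Multiset.mem_add.mp hx with h | h
  · rw [Multiset.eq_of_mem_replicate h]; exact Nat.zero_le _
  · obtain ⟨i, hi, hxi⟩ := Multiset.mem_sum.mp h
    rw [Multiset.eq_of_mem_replicate hxi]
    exact Finset.mem_range.mp hi

lemma mem_blocks : ∀ (μ : List (Finset ℕ)) (B : Finset ℕ), B ∈ μ → ∀ x ∈ B,
    x ∈ (μ.map Finset.val).sum := by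
  intro μ
  induction μ with
  | nil => simp
  | cons D rest ih =>
    intro B hB x hx
    rw [List.map_cons, List.sum_cons, Multiset.mem_add]
    rcases List.mem_cons.mp hB with rfl | h
    · exact Or.inl hx
    · exact Or.inr (ih B h x hx)

end ompaux



/-- If the last part of `α` is `1` and `μ ∈ OP^all_{r;β,α}` has letters in
`{0,…,m}`, then `miniword` commutes with the letterwise shift `j ↦ j − 1 (mod m+1)`. -/
theorem miniword_cycle_shift (m r : ℕ) (hm : 1 ≤ m) (β α : List ℕ)
    (hβ : β.length = m) (hαpos : ∀ a ∈ α, 0 < a) (hlast : α.getLastD 0 = 1)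
    (μ : List (Finset ℕ)) (hμ : omp.IsOPallSh r β α μ) :
    omp.miniword (μ.map (Finset.image (fun j => (j + m) % (m + 1)))) =
      (omp.miniword μ).map (fun j => (j + m) % (m + 1)) := by
  have hc : (fun j => (j + m) % (m + 1)) = ompaux.c m := rfl
  rw [hc]
  apply ompaux.main_ind m μ hμ.1
  · intro B hB x hx
    have hmem : x ∈ omp.content r β := hμ.2.1 ▸ ompaux.mem_blocks μ B hB x hx
    have := ompaux.content_le r β x hmem
    omega
  · intro B' hB'
    have hmap : (μ.map Finset.card).getLast? = some B'.card := by
      rw [List.getLast?_map, hB']; rfl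
    rw [hμ.2.2] at hmap
    have : α.getLastD 0 = B'.card := by
      rw [List.getLastD_eq_getLast?, hmap]; rfl
    omega
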